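/- Let λ, α, β, v^b, v^a, q^b, q^a be strictly positive real numbers satisfying −λv^b/α < q^a v^b − q^b v^a < λ v^a/β. Define Q^b and Q^a as follows: Q^b(t) = −(α q^a v^b − α q^b v^a + λ v^b)/(α v^a + β v^b) + (v^b (β q^b + α q^a + λ)/(β v^b + α v^a))·e^{−(v^bβ + v^aα)t}, and Q^a(t) = −(β q^b v^a − β q^a v^b + λ v^a)/(α v^a + β v^b) + (v^a (β q^b + α q^a + λ)/(β v^b + α v^a))·e^{−(v^bβ + v^aα)t}. Then the numbers τ^b = −(1/(v^bβ + v^aα))·log( (v^bλ + q^a v^bα − q^b v^aα)/(v^bβ q^b + v^bα q^a + λ v^b) ) and τ^a = −(1/(v^bβ + v^aα))·log( (−q^a v^bβ + q^b v^aβ + λ v^a)/(β q^b v^a + α q^a v^a + λ v^a) ) are well defined (the arguments of the logarithms lie in (0,1)), strictly positive, and satisfy Q^b(τ^b) = 0 and Q^a(τ^a) = 0. -/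

import Mathlib

open Real

/-- Depletion times of the fluid limits of the best bid and ask queues under
queue-length-dependent arrival intensity: under the stated positivity and balance
conditions, the arguments of the logarithms defining `τᵇ` and `τᵃ` lie in `(0,1)`,
`τᵇ, τᵃ > 0`, and `Qᵇ(τᵇ) = 0`, `Qᵃ(τᵃ) = 0`. -/
theorem linear_intensity_depletion_times
    (lam α β vb va qb qa : ℝ)
    (hlam : 0 < lam) (hα : 0 < α) (hβ : 0 < β) (hvb : 0 < vb) (hva : 0 < va)
    (hqb : 0 < qb) (hqa : 0 < qa)
    (hcond1 : -(lam * vb) / α < qa * vb - qb * va)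
    (hcond2 : qa * vb - qb * va < lam * va / β)
    (Qb Qa : ℝ → ℝ)
    (hQb : ∀ t, Qb t = -(α * qa * vb - α * qb * va + lam * vb) / (α * va + β * vb)
        + (vb * (β * qb + α * qa + lam) / (β * vb + α * va)) *
          Real.exp (-(vb * β + va * α) * t))
    (hQa : ∀ t, Qa t = -(β * qb * va - β * qa * vb + lam * va) / (α * va + β * vb)
        + (va * (β * qb + α * qa + lam) / (β * vb + α * va)) *
          Real.exp (-(vb * β + va * α) * t))
    (τb τa : ℝ)
    (hτb : τb = -(1 / (vb * β + va * α)) *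
        Real.log ((vb * lam + qa * vb * α - qb * va * α) /
          (vb * β * qb + vb * α * qa + lam * vb)))
    (hτa : τa = -(1 / (vb * β + va * α)) *
        Real.log ((-(qa * vb * β) + qb * va * β + lam * va) /
          (β * qb * va + α * qa * va + lam * va))) :
    (0 < (vb * lam + qa * vb * α - qb * va * α) / (vb * β * qb + vb * α * qa + lam * vb) ∧
      (vb * lam + qa * vb * α - qb * va * α) / (vb * β * qb + vb * α * qa + lam * vb) < 1) ∧
    (0 < (-(qa * vb * β) + qb * va * β + lam * va) / (β * qb * va + α * qa * va + lam * va) ∧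
      (-(qa * vb * β) + qb * va * β + lam * va) / (β * qb * va + α * qa * va + lam * va) < 1) ∧
    0 < τb ∧ 0 < τa ∧ Qb τb = 0 ∧ Qa τa = 0 := by
  have hk : 0 < vb * β + va * α := by positivity
  have hk' : vb * β + va * α ≠ 0 := ne_of_gt hk
  have hDenb : 0 < vb * β * qb + vb * α * qa + lam * vb := by positivity
  have hDena : 0 < β * qb * va + α * qa * va + lam * va := by positivity
  have h1 : -(lam * vb) < (qa * vb - qb * va) * α := (div_lt_iff₀ hα).mp hcond1
  have h2 : (qa * vb - qb * va) * β < lam * va := (lt_div_iff₀ hβ).mp hcond2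
  have hNumb : 0 < vb * lam + qa * vb * α - qb * va * α := by nlinarith
  have hNuma : 0 < -(qa * vb * β) + qb * va * β + lam * va := by nlinarith
  have hrb0 : 0 < (vb * lam + qa * vb * α - qb * va * α) /
      (vb * β * qb + vb * α * qa + lam * vb) := div_pos hNumb hDenb
  have hrb1 : (vb * lam + qa * vb * α - qb * va * α) /
      (vb * β * qb + vb * α * qa + lam * vb) < 1 := by
    rw [div_lt_one hDenb]; nlinarith
  have hra0 : 0 < (-(qa * vb * β) + qb * va * β + lam * va) /
      (β * qb * va + α * qa * va + lam * va) := div_pos hNuma hDena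
  have hra1 : (-(qa * vb * β) + qb * va * β + lam * va) /
      (β * qb * va + α * qa * va + lam * va) < 1 := by
    rw [div_lt_one hDena]; nlinarith
  have hlogb : Real.log ((vb * lam + qa * vb * α - qb * va * α) /
      (vb * β * qb + vb * α * qa + lam * vb)) < 0 := Real.log_neg hrb0 hrb1
  have hloga : Real.log ((-(qa * vb * β) + qb * va * β + lam * va) /
      (β * qb * va + α * qa * va + lam * va)) < 0 := Real.log_neg hra0 hra1
  have hτbpos : 0 < τb := by
    rw [hτb]
    have : 0 < 1 / (vb * β + va * α) := by positivity
    nlinarith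
  have hτapos : 0 < τa := by
    rw [hτa]
    have : 0 < 1 / (vb * β + va * α) := by positivity
    nlinarith
  have hexpb : Real.exp (-(vb * β + va * α) * τb) =
      (vb * lam + qa * vb * α - qb * va * α) / (vb * β * qb + vb * α * qa + lam * vb) := by
    rw [hτb]
    have : -(vb * β + va * α) * (-(1 / (vb * β + va * α)) *
        Real.log ((vb * lam + qa * vb * α - qb * va * α) /
          (vb * β * qb + vb * α * qa + lam * vb))) =
        Real.log ((vb * lam + qa * vb * α - qb * va * α) /
          (vb * β * qb + vb * α * qa + lam * vb)) := by
      field_simp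
    rw [this, Real.exp_log hrb0]
  have hexpa : Real.exp (-(vb * β + va * α) * τa) =
      (-(qa * vb * β) + qb * va * β + lam * va) / (β * qb * va + α * qa * va + lam * va) := by
    rw [hτa]
    have : -(vb * β + va * α) * (-(1 / (vb * β + va * α)) *
        Real.log ((-(qa * vb * β) + qb * va * β + lam * va) /
          (β * qb * va + α * qa * va + lam * va))) =
        Real.log ((-(qa * vb * β) + qb * va * β + lam * va) /
          (β * qb * va + α * qa * va + lam * va)) := by
      field_simp
    rw [this, Real.exp_log hra0]
  have hQbz : Qb τb = 0 := by
    rw [hQb, hexpb]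
    field_simp
    ring
  have hQaz : Qa τa = 0 := by
    rw [hQa, hexpa]
    field_simp
    ring
  exact ⟨⟨hrb0, hrb1⟩, ⟨hra0, hra1⟩, hτbpos, hτapos, hQbz, hQaz⟩
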